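/- For all integers n ≥ 1, k ≥ 1 and m with 1 ≤ m ≤ n, ∑_{l=1}^{n} ((−1)^l/(k+l)) · C(n,l) · l^m = (−1)^m · k^{m−1} / C(n+k, k). -/

import Mathlib

open Finset

lemma sum0 : ∀ (n k : ℕ), 1 ≤ k →
    ∑ l ∈ range (n+1), (-1:ℚ)^l * (n.choose l : ℚ) / ((k:ℚ) + l)
      = (n.factorial : ℚ) * ((k-1).factorial : ℚ) / ((n+k).factorial : ℚ) := by
  intro n
  induction n with
  | zero =>
    intro k hk
    have hk0 : (k:ℚ) ≠ 0 := by positivity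
    have hkf : (k.factorial : ℚ) = k * (k-1).factorial := by
      rw [← Nat.cast_mul, Nat.mul_factorial_pred (by omega)]
    simp [hkf]
    field_simp
  | succ n ih =>
    intro k hk
    have hk0 : (k:ℚ) ≠ 0 := by positivity
    have hF : ∀ l ∈ range (n+1),
        (-1:ℚ)^(l+1) * ((n+1).choose (l+1) : ℚ) / ((k:ℚ) + ((l:ℚ)+1))
          = (-((-1:ℚ)^l * (n.choose l : ℚ) / (((k+1:ℕ):ℚ) + l)))
            + (-1:ℚ)^(l+1) * (n.choose (l+1) : ℚ) / ((k:ℚ) + ((l:ℚ)+1)) := by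
      intro l _
      have hc : ((n+1).choose (l+1) : ℚ) = (n.choose l : ℚ) + (n.choose (l+1) : ℚ) := by
        rw [← Nat.cast_add, Nat.choose_succ_succ]
      have hne : (k:ℚ) + ((l:ℚ)+1) ≠ 0 := by positivity
      have hne2 : (((k+1:ℕ):ℚ) + l) ≠ 0 := by push_cast; positivity
      rw [hc]
      push_cast at hne2 ⊢
      field_simp
      ring
    rw [Finset.sum_range_succ' (fun l => (-1:ℚ)^l * ((n+1).choose l : ℚ) / ((k:ℚ) + l)) (n+1)]
    simp only [Nat.cast_add, Nat.cast_one, Nat.cast_zero] at hF ⊢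
    rw [Finset.sum_congr rfl hF, Finset.sum_add_distrib]
    -- second sum: ∑_{l<n+1} F(l+1) where F j = (-1)^j C(n,j)/(k+j)
    have h2 : ∑ l ∈ range (n+1), (-1:ℚ)^(l+1) * (n.choose (l+1) : ℚ) / ((k:ℚ) + ((l:ℚ)+1))
        = (∑ j ∈ range (n+1), (-1:ℚ)^j * (n.choose j : ℚ) / ((k:ℚ) + j)) - 1/(k:ℚ) := by
      have := Finset.sum_range_succ' (fun j => (-1:ℚ)^j * (n.choose j : ℚ) / ((k:ℚ) + j)) (n+1)
      simp only [Nat.cast_add, Nat.cast_one, Nat.cast_zero] at this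
      rw [Finset.sum_range_succ] at this
      simp [Nat.choose_succ_self] at this
      rw [eq_sub_iff_add_eq, one_div]
      linarith [this]
    rw [h2, Finset.sum_neg_distrib]
    have ih' := ih (k+1) (by omega)
    rw [show k+1-1 = k from rfl] at ih'
    push_cast at ih'
    rw [ih', ih k hk]
    have hkf : (k.factorial : ℚ) = k * (k-1).factorial := by
      rw [← Nat.cast_mul, Nat.mul_factorial_pred (by omega)]
    have e3 : ((((n+k)+1).factorial : ℚ)) = ((n:ℚ)+(k:ℚ)+1) * ((n+k).factorial : ℚ) := by
      rw [Nat.factorial_succ]; push_cast; ring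
    have e4 : (((n+1).factorial : ℚ)) = ((n:ℚ)+1) * (n.factorial : ℚ) := by
      rw [Nat.factorial_succ]; push_cast; ring
    rw [show n + (k+1) = (n+k)+1 from by omega, show n+1+k = (n+k)+1 from by omega, e3, e4]
    have p1 : ((n+k).factorial : ℚ) ≠ 0 := by positivity
    have p2 : ((n:ℚ)+k+1) ≠ 0 := by positivity
    rw [hkf, Nat.choose_zero_right, Nat.cast_one]
    field_simp
    ring

lemma altsum : ∀ n : ℕ, ∀ j : ℕ, j < n →
    ∑ l ∈ range (n+1), (-1:ℚ)^l * (n.choose l : ℚ) * (l:ℚ)^j = 0 := by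
  intro n
  induction n with
  | zero => intro j hj; omega
  | succ n ih =>
    intro j hj
    match j with
    | 0 =>
      simp only [pow_zero, mul_one]
      have h := Int.alternating_sum_range_choose_of_ne (n := n+1) (Nat.succ_ne_zero n)
      exact_mod_cast h
    | t+1 =>
      have ht : t < n := by omega
      rw [Finset.sum_range_succ'
        (fun l => (-1:ℚ)^l * ((n+1).choose l : ℚ) * (l:ℚ)^(t+1)) (n+1)]
      have hterm : ∀ l ∈ range (n+1),
          (-1:ℚ)^(l+1) * ((n+1).choose (l+1) : ℚ) * ((l+1:ℕ):ℚ)^(t+1)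
            = (-((n:ℚ)+1)) * ∑ s ∈ range (t+1),
                (t.choose s : ℚ) * ((-1:ℚ)^l * (n.choose l : ℚ) * (l:ℚ)^s) := by
        intro l _
        have hc : ((n+1).choose (l+1) : ℚ) * ((l:ℚ)+1) = ((n:ℚ)+1) * (n.choose l : ℚ) := by
          have h1 : ((n+1) * n.choose l : ℕ) = ((n+1).choose (l+1) * (l+1) : ℕ) := by
            simpa [Nat.succ_eq_add_one] using Nat.add_one_mul_choose_eq n l
          have h2 := congrArg (fun z : ℕ => (z : ℚ)) h1
          push_cast at h2
          linarith [h2]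
        have hpow : ((l:ℚ)+1)^t = ∑ s ∈ range (t+1), (l:ℚ)^s * (t.choose s : ℚ) := by
          have := add_pow (l:ℚ) 1 t
          simpa using this
        push_cast
        calc (-1:ℚ)^(l+1) * ((n+1).choose (l+1) : ℚ) * ((l:ℚ)+1)^(t+1)
            = ((-1:ℚ)^(l+1) * (((n+1).choose (l+1) : ℚ) * ((l:ℚ)+1))) * ((l:ℚ)+1)^t := by
              ring
          _ = ((-1:ℚ)^(l+1) * (((n:ℚ)+1) * (n.choose l : ℚ))) * ((l:ℚ)+1)^t := by rw [hc]
          _ = (-((n:ℚ)+1)) * ∑ s ∈ range (t+1),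
                (t.choose s : ℚ) * ((-1:ℚ)^l * (n.choose l : ℚ) * (l:ℚ)^s) := by
              rw [hpow, Finset.mul_sum, Finset.mul_sum]
              refine Finset.sum_congr rfl fun s _ => by ring
      rw [Finset.sum_congr rfl hterm]
      rw [← Finset.mul_sum, Finset.sum_comm]
      have hz : ∀ s ∈ range (t+1),
          ∑ l ∈ range (n+1), (t.choose s : ℚ) * ((-1:ℚ)^l * (n.choose l : ℚ) * (l:ℚ)^s) = 0 := by
        intro s hs
        rw [← Finset.mul_sum, ih s (by simp at hs; omega), mul_zero]
      rw [Finset.sum_congr rfl hz]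
      simp

/-- For all integers `n ≥ 1`, `k ≥ 1` and `1 ≤ m ≤ n`,
`∑_{l=1}^{n} ((−1)^l/(k+l)) · C(n,l) · l^m = (−1)^m · k^{m−1} / C(n+k, k)`. -/
theorem sum_inv_shift_binom_pow (n k m : ℕ) (hn : 1 ≤ n) (hk : 1 ≤ k)
    (hm : 1 ≤ m) (hmn : m ≤ n) :
    ∑ l ∈ Finset.Icc 1 n,
        ((-1 : ℚ) ^ l / ((k : ℚ) + (l : ℚ))) * (Nat.choose n l : ℚ) * (l : ℚ) ^ m =
      (-1 : ℚ) ^ m * (k : ℚ) ^ (m - 1) / (Nat.choose (n + k) k : ℚ) := by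
  have hk0 : (0:ℚ) < (k:ℚ) := by exact_mod_cast hk
  set S : ℕ → ℚ := fun m => ∑ l ∈ Finset.Icc 1 n,
      ((-1 : ℚ) ^ l / ((k : ℚ) + (l : ℚ))) * (Nat.choose n l : ℚ) * (l : ℚ) ^ m with hS
  have hsplit : ∀ f : ℕ → ℚ, ∑ l ∈ range (n+1), f l = f 0 + ∑ l ∈ Finset.Icc 1 n, f l := by
    intro f
    rw [Finset.range_eq_Ico, Finset.sum_eq_sum_Ico_succ_bot (by omega), Finset.Ico_add_one_right_eq_Icc]
  have hC : ((n+k).choose k : ℚ)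
      = ((n+k).factorial : ℚ) / ((k.factorial : ℚ) * (n.factorial : ℚ)) := by
    rw [Nat.cast_choose ℚ (Nat.le_add_left k n)]
    congr 2
    rw [Nat.add_sub_cancel]
  have hCne : ((n+k).choose k : ℚ) ≠ 0 := by
    have := Nat.choose_pos (Nat.le_add_left k n)
    positivity
  have hrec : ∀ j : ℕ, S (j+1)
      = (∑ l ∈ Finset.Icc 1 n, (-1:ℚ)^l * (n.choose l : ℚ) * (l:ℚ)^j) - k * S j := by
    intro j
    rw [hS]
    simp only
    rw [Finset.mul_sum, ← Finset.sum_sub_distrib]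
    refine Finset.sum_congr rfl fun l hl => ?_
    have hne : (k:ℚ) + (l:ℚ) ≠ 0 := by positivity
    field_simp
    ring
  have hB : ∀ j : ℕ, j < n →
      (∑ l ∈ Finset.Icc 1 n, (-1:ℚ)^l * (n.choose l : ℚ) * (l:ℚ)^j)
        = - ((0:ℚ)^j) := by
    intro j hj
    have h0 := altsum n j hj
    rw [hsplit (fun l => (-1:ℚ)^l * (n.choose l : ℚ) * (l:ℚ)^j)] at h0
    simp only [pow_zero, Nat.choose_zero_right, Nat.cast_one, Nat.cast_zero, one_mul,
      mul_one] at h0 ⊢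
    linarith [h0]
  have hkf : (k.factorial : ℚ) = k * ((k-1).factorial : ℚ) := by
    rw [← Nat.cast_mul, Nat.mul_factorial_pred (by omega)]
  have hS0 : S 0 = (n.factorial : ℚ) * ((k-1).factorial : ℚ) / ((n+k).factorial : ℚ)
      - 1/(k:ℚ) := by
    have h0 := sum0 n k hk
    rw [hsplit (fun l => (-1:ℚ)^l * (n.choose l : ℚ) / ((k:ℚ) + l))] at h0
    rw [hS]
    simp only [pow_zero, mul_one]
    have : (∑ l ∈ Finset.Icc 1 n, ((-1:ℚ)^l / ((k:ℚ) + l)) * (n.choose l : ℚ))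
        = ∑ l ∈ Finset.Icc 1 n, (-1:ℚ)^l * (n.choose l : ℚ) / ((k:ℚ) + l) := by
      refine Finset.sum_congr rfl fun l _ => by ring
    rw [this]
    simp only [pow_zero, Nat.choose_zero_right, Nat.cast_one, Nat.cast_zero, one_mul,
      add_zero] at h0
    rw [eq_sub_iff_add_eq]
    linarith [h0]
  have key : ∀ j : ℕ, 1 ≤ j → j ≤ n →
      S j = (-1:ℚ)^j * (k:ℚ)^(j-1) / ((n+k).choose k : ℚ) := by
    intro j
    induction j with
    | zero => omega
    | succ j ihj =>
      intro _ hjn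
      rcases Nat.eq_zero_or_pos j with hj0 | hj1
      · subst hj0
        rw [hrec 0, hB 0 (by omega), hS0, hC, hkf]
        have hfn : ((n+k).factorial : ℚ) ≠ 0 := by positivity
        have hf1 : ((k-1).factorial : ℚ) ≠ 0 := by positivity
        have hf2 : (n.factorial : ℚ) ≠ 0 := by positivity
        field_simp
        ring
      · obtain ⟨p, rfl⟩ : ∃ p, j = p+1 := ⟨j-1, by omega⟩
        rw [hrec (p+1), hB (p+1) (by omega), ihj (by omega) (by omega)]
        simp only [Nat.add_sub_cancel, zero_pow (by omega : p+1 ≠ 0)]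
        field_simp
        ring
  exact key m hm hmn
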